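/- For every z < 0, the sigmoid function satisfies (σ(−z) − σ(z)) / (−σ′(z)·z) ≥ 2, where σ′(z) = σ(z)(1−σ(z)); equivalently, σ(−z) − σ(z) ≥ −2·σ(z)·(1−σ(z))·z for all z < 0. -/

import Mathlib

/-- The sigmoid function `σ(z) = 1/(1+e^{-z})`. -/
noncomputable def sigmoid (z : ℝ) : ℝ := 1 / (1 + Real.exp (-z))

/-- The derivative of the sigmoid, `σ'(z) = σ(z)(1-σ(z))`. -/
noncomputable def sigmoid' (z : ℝ) : ℝ := sigmoid z * (1 - sigmoid z)

lemma key (z : ℝ) (hz : z < 0) : 1 - Real.exp z ^ 2 ≥ -(2 * z * Real.exp z) := by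
  have h : -z ≤ Real.sinh (-z) := (Real.self_le_sinh_iff).2 (by linarith)
  rw [Real.sinh_eq, neg_neg] at h
  have he : Real.exp (-z) * Real.exp z = 1 := by
    rw [← Real.exp_add]; simp
  have hpos := Real.exp_pos z
  nlinarith [h, he]

/-- For all `z < 0`, `(σ(-z) - σ(z))/(-σ'(z)·z) ≥ 2`; equivalently,
`σ(-z) - σ(z) ≥ -2σ(z)(1-σ(z))z`. -/
theorem sigmoid_gap_ratio (z : ℝ) (hz : z < 0) :
    (sigmoid (-z) - sigmoid z) / (-(sigmoid' z * z)) ≥ 2 ∧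
    sigmoid (-z) - sigmoid z ≥ -(2 * sigmoid z * (1 - sigmoid z) * z) := by
  have he : Real.exp (-z) * Real.exp z = 1 := by rw [← Real.exp_add]; simp
  have hpos := Real.exp_pos z
  have hpos' := Real.exp_pos (-z)
  have hs : sigmoid z = Real.exp z / (1 + Real.exp z) := by
    unfold sigmoid
    rw [div_eq_div_iff (by positivity) (by positivity)]
    ring_nf
    nlinarith [he]
  have hs' : sigmoid (-z) = 1 / (1 + Real.exp z) := by
    unfold sigmoid
    rw [neg_neg]
  have hk := key z hz
  have hd : (0:ℝ) < 1 + Real.exp z := by positivity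
  constructor
  · rw [ge_iff_le, le_div_iff₀]
    · unfold sigmoid'
      rw [hs, hs']
      rw [div_sub_div_same]
      field_simp
      nlinarith [hk, sq_nonneg (1 + Real.exp z), mul_pos hpos hd]
    · unfold sigmoid'
      rw [hs]
      have h1 : 1 - Real.exp z / (1 + Real.exp z) = 1 / (1 + Real.exp z) := by
        field_simp; ring
      rw [h1]
      have : Real.exp z / (1 + Real.exp z) * (1 / (1 + Real.exp z)) > 0 := by positivity
      nlinarith [this]
  · rw [hs, hs']
    have h1 : 1 - Real.exp z / (1 + Real.exp z) = 1 / (1 + Real.exp z) := by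
      field_simp; ring
    rw [h1, div_sub_div_same, ge_iff_le]
    have h2 : -(2 * (Real.exp z / (1 + Real.exp z)) * (1 / (1 + Real.exp z)) * z)
        = (-(2 * Real.exp z * z)) / ((1 + Real.exp z) ^ 2) := by
      field_simp
    rw [h2, div_le_div_iff₀ (by positivity) hd]
    nlinarith [hk, sq_nonneg (1 + Real.exp z)]
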